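/- Linear convergence of projected inexact gradient descent (deterministic core of Theorem 2): Let C : ℝ^n → ℝ be differentiable with β′-Lipschitz gradient and μ-strongly convex, where 0 < μ < β′, and set γ = μ/(β′ − μ). Let X ⊆ ℝ^n be nonempty, closed and convex, let x⁰ ∈ X, x* ∈ X, ε ≥ 0, and for j = 0, …, K − 1 let g^j ∈ ℝ^n and x^{j+1} = Π_X(x^j − (1/β′)g^j). If for every j we have ⟨∇C(x^j) − g^j, x^{j+1} − x^j⟩ ≤ ε and ⟨∇C(x^j) − g^j, x^{j+1} − x*⟩ ≤ ε, then C(x^K) − C(x*) ≤ (1/(1 + γ))^K·(C(x⁰) − C(x*)) + ((1 + γ)/γ)·ε. -/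

import Mathlib

open scoped RealInnerProductSpace

section Aux
variable {E : Type*} [NormedAddCommGroup E] [InnerProductSpace ℝ E] [CompleteSpace E]

lemma line_hasDerivAt {C : E → ℝ} (h : Differentiable ℝ C) (q v : E) (t : ℝ) :
    HasDerivAt (fun s : ℝ => C (q + s • v)) ⟪gradient C (q + t • v), v⟫ t := by
  have h1 : HasDerivAt (fun s : ℝ => q + s • v) v t := by
    simpa using ((hasDerivAt_id t).smul_const v).const_add q
  have h2 : HasFDerivAt C (InnerProductSpace.toDual ℝ E (gradient C (q + t • v))) (q + t • v) :=
    (hasGradientAt_iff_hasFDerivAt).mp (h (q + t • v)).hasGradientAt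
  have h3 := h2.comp_hasDerivAt t h1
  rw [InnerProductSpace.toDual_apply_apply] at h3
  exact h3

lemma descent_lemma {C : E → ℝ} {β' : ℝ} (hβ : 0 < β') (hdiff : Differentiable ℝ C)
    (hlip : ∀ z w, ‖gradient C z - gradient C w‖ ≤ β' * ‖z - w‖) (q p : E) :
    C p ≤ C q + ⟪gradient C q, p - q⟫ + β' / 2 * ‖p - q‖ ^ 2 := by
  set v := p - q with hv
  set θ : ℝ → ℝ := fun t => C (q + t • v) - t * ⟪gradient C q, v⟫ - β' * t ^ 2 / 2 * ‖v‖ ^ 2 with hθ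
  have hder : ∀ t : ℝ, HasDerivAt θ
      (⟪gradient C (q + t • v), v⟫ - ⟪gradient C q, v⟫ - β' * t * ‖v‖ ^ 2) t := by
    intro t
    have h1 := line_hasDerivAt hdiff q v t
    have h2 : HasDerivAt (fun t : ℝ => t * ⟪gradient C q, v⟫) ⟪gradient C q, v⟫ t := by
      simpa using (hasDerivAt_id t).mul_const ⟪gradient C q, v⟫
    have h3 : HasDerivAt (fun t : ℝ => β' * t ^ 2 / 2 * ‖v‖ ^ 2) (β' * t * ‖v‖ ^ 2) t := by
      have := ((hasDerivAt_pow 2 t).const_mul β').div_const 2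
      have := this.mul_const (‖v‖ ^ 2)
      exact this.congr_deriv (by rw [show (2:ℕ) - 1 = 1 from rfl, pow_one]; push_cast; ring)
    exact (h1.sub h2).sub h3
  have hmono : AntitoneOn θ (Set.Icc 0 1) := by
    apply antitoneOn_of_deriv_nonpos (convex_Icc 0 1)
    · exact Continuous.continuousOn (by
        have : Differentiable ℝ θ := fun t => (hder t).differentiableAt
        exact this.continuous)
    · intro t ht
      exact (hder t).differentiableAt.differentiableWithinAt
    · intro t ht
      rw [interior_Icc] at ht
      rw [(hder t).deriv]
      have key : ⟪gradient C (q + t • v) - gradient C q, v⟫ ≤ β' * t * ‖v‖ ^ 2 := by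
        calc ⟪gradient C (q + t • v) - gradient C q, v⟫
            ≤ ‖gradient C (q + t • v) - gradient C q‖ * ‖v‖ := real_inner_le_norm _ _
          _ ≤ β' * ‖(q + t • v) - q‖ * ‖v‖ := by
              gcongr; exact hlip _ _
          _ = β' * t * ‖v‖ ^ 2 := by
              rw [add_sub_cancel_left, norm_smul, Real.norm_eq_abs, abs_of_pos ht.1]
              ring
      rw [inner_sub_left] at key
      linarith
  have h01 := hmono (Set.left_mem_Icc.mpr zero_le_one) (Set.right_mem_Icc.mpr zero_le_one)
    zero_le_one
  simp only [hθ, zero_smul, add_zero, one_smul, zero_mul, mul_zero] at h01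
  have : q + v = p := by simp [hv]
  rw [this] at h01
  nlinarith [h01]

lemma sc_lower {C : E → ℝ} {μ : ℝ} (hdiff : Differentiable ℝ C)
    (hsc : ConvexOn ℝ Set.univ (fun z => C z - μ / 2 * ‖z‖ ^ 2)) (a b : E) :
    C a + ⟪gradient C a, b - a⟫ + μ / 2 * ‖b - a‖ ^ 2 ≤ C b := by
  set v := b - a with hv
  set φ : ℝ → ℝ := fun t => C (a + t • v) - μ / 2 * ‖a + t • v‖ ^ 2 with hφ
  have hφconv : ConvexOn ℝ Set.univ φ := by
    have := hsc.comp_affineMap (AffineMap.lineMap a b : ℝ →ᵃ[ℝ] E)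
    rw [Set.preimage_univ] at this
    have e : φ = (fun z => C z - μ / 2 * ‖z‖ ^ 2) ∘ ⇑(AffineMap.lineMap a b : ℝ →ᵃ[ℝ] E) := by
      funext t
      simp [hφ, AffineMap.lineMap_apply, hv, add_comm, Function.comp]
    rw [e]; exact this
  have hquad : ∀ t : ℝ, ‖a + t • v‖ ^ 2 = ‖a‖ ^ 2 + 2 * t * ⟪a, v⟫ + t ^ 2 * ‖v‖ ^ 2 := by
    intro t
    rw [norm_add_sq_real, real_inner_smul_right, norm_smul, Real.norm_eq_abs, mul_pow, sq_abs]
    ring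
  have hder : HasDerivAt φ (⟪gradient C a, v⟫ - μ * ⟪a, v⟫) 0 := by
    have h1 : HasDerivAt (fun t : ℝ => C (a + t • v)) ⟪gradient C (a + (0:ℝ) • v), v⟫ 0 :=
      line_hasDerivAt hdiff a v 0
    rw [zero_smul, add_zero] at h1
    have h2 : HasDerivAt (fun t : ℝ => μ / 2 * ‖a + t • v‖ ^ 2) (μ * ⟪a, v⟫) 0 := by
      have h3 : HasDerivAt (fun t : ℝ => μ / 2 * (‖a‖ ^ 2 + 2 * t * ⟪a, v⟫ + t ^ 2 * ‖v‖ ^ 2))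
          (μ * ⟪a, v⟫) 0 := by
        have hid : HasDerivAt (fun t : ℝ => ‖a‖ ^ 2 + 2 * t * ⟪a, v⟫ + t ^ 2 * ‖v‖ ^ 2)
            (2 * ⟪a, v⟫ + 2 * 0 * ‖v‖ ^ 2) 0 := by
          have ha : HasDerivAt (fun t : ℝ => 2 * t * ⟪a, v⟫) (2 * ⟪a, v⟫) 0 := by
            simpa using (((hasDerivAt_id (0:ℝ)).const_mul 2).mul_const ⟪a, v⟫)
          have hb : HasDerivAt (fun t : ℝ => t ^ 2 * ‖v‖ ^ 2) (2 * 0 * ‖v‖ ^ 2) 0 := by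
            simpa using (hasDerivAt_pow 2 (0:ℝ)).mul_const (‖v‖ ^ 2)
          exact ((ha.const_add (‖a‖ ^ 2)).add hb).congr_deriv (by ring)
        have := hid.const_mul (μ / 2)
        exact this.congr_deriv (by ring)
      convert h3 using 2 with t
      rw [hquad]
    exact h1.sub h2
  have hslope := hφconv.le_slope_of_hasDerivAt (Set.mem_univ 0) (Set.mem_univ 1) zero_lt_one hder
  rw [slope_def_field] at hslope
  simp only [hφ, zero_smul, add_zero, one_smul, sub_zero, div_one] at hslope
  have hab : a + v = b := by simp [hv]
  rw [hab] at hslope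
  have hnorm : ‖b - a‖ ^ 2 = ‖b‖ ^ 2 - 2 * ⟪a, b⟫ + ‖a‖ ^ 2 := by
    rw [norm_sub_sq_real, real_inner_comm]; try ring
  have hav : ⟪a, v⟫ = ⟪a, b⟫ - ‖a‖ ^ 2 := by
    rw [hv, inner_sub_right, real_inner_self_eq_norm_sq]
  have hvv : ‖v‖ ^ 2 = ‖b - a‖ ^ 2 := by rw [hv]
  rw [hav] at hslope
  rw [hvv, hnorm]
  linarith [hslope]

lemma sc_comb {C : E → ℝ} {μ : ℝ}
    (hsc : ConvexOn ℝ Set.univ (fun z => C z - μ / 2 * ‖z‖ ^ 2)) (a b : E) {l : ℝ}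
    (h0 : 0 ≤ l) (h1 : l ≤ 1) :
    C (a + l • (b - a)) ≤ (1 - l) * C a + l * C b - μ / 2 * (l * (1 - l)) * ‖a - b‖ ^ 2 := by
  have hz : (1 - l) • a + l • b = a + l • (b - a) := by
    rw [smul_sub, sub_smul, one_smul]; abel
  have hcx := hsc.2 (Set.mem_univ a) (Set.mem_univ b) (by linarith : (0:ℝ) ≤ 1 - l) h0
    (by ring)
  rw [hz] at hcx
  simp only [smul_eq_mul] at hcx
  have hid : ‖a + l • (b - a)‖ ^ 2 =
      (1 - l) * ‖a‖ ^ 2 + l * ‖b‖ ^ 2 - l * (1 - l) * ‖a - b‖ ^ 2 := by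
    rw [← hz, norm_add_sq_real, norm_smul, norm_smul, real_inner_smul_left,
      real_inner_smul_right, norm_sub_sq_real, Real.norm_eq_abs, Real.norm_eq_abs,
      abs_of_nonneg h0, abs_of_nonneg (by linarith : (0:ℝ) ≤ 1 - l), mul_pow, mul_pow]
    ring
  rw [hid] at hcx
  nlinarith [hcx]

lemma proj_varineq {X : Set E} (hXne : X.Nonempty) (hXconv : Convex ℝ X)
    {proj : E → E} (hproj : ∀ w, proj w ∈ X ∧ ∀ z ∈ X, ‖proj w - w‖ ≤ ‖z - w‖)
    (w : E) {z : E} (hz : z ∈ X) : ⟪w - proj w, z - proj w⟫ ≤ 0 := by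
  have hmem := (hproj w).1
  have : Nonempty X := hXne.to_subtype
  have hinf : ‖w - proj w‖ = ⨅ v : X, ‖w - v‖ := by
    apply le_antisymm
    · apply le_ciInf
      intro v
      rw [norm_sub_rev w, norm_sub_rev w]
      exact (hproj w).2 v v.2
    · apply ciInf_le ⟨0, by rintro r ⟨v, rfl⟩; positivity⟩ (⟨proj w, hmem⟩ : X)
  exact (norm_eq_iInf_iff_real_inner_le_zero hXconv hmem).mp hinf z hz

lemma one_step {C : E → ℝ} {β' μ : ℝ} (hμ : 0 < μ) (hμβ : μ < β')
    (hdiff : Differentiable ℝ C)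
    (hlip : ∀ z w, ‖gradient C z - gradient C w‖ ≤ β' * ‖z - w‖)
    (hsc : ConvexOn ℝ Set.univ (fun z => C z - μ / 2 * ‖z‖ ^ 2))
    {X : Set E} (hXne : X.Nonempty) (hXconv : Convex ℝ X)
    {proj : E → E} (hproj : ∀ w, proj w ∈ X ∧ ∀ z ∈ X, ‖proj w - w‖ ≤ ‖z - w‖)
    {q w gv p : E} (hq : q ∈ X) (hw : w ∈ X) (hp : p = proj (q - (1 / β') • gv))
    {ε : ℝ} (he1 : ⟪gradient C q - gv, p - q⟫ ≤ ε) (he2 : ⟪gradient C q - gv, p - w⟫ ≤ ε) :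
    C p - C w ≤ (1 - μ / β') * (C q - C w) + ε := by
  have hβ : (0:ℝ) < β' := hμ.trans hμβ
  set l : ℝ := μ / β' with hl
  have hl0 : 0 < l := div_pos hμ hβ
  have hl1 : l < 1 := (div_lt_one hβ).mpr hμβ
  set z : E := q + l • (w - q) with hz
  have hzX : z ∈ X := by
    have := hXconv hq hw (by linarith : (0:ℝ) ≤ 1 - l) hl0.le (by ring)
    have hzeq : (1 - l) • q + l • w = z := by rw [hz]; module
    rwa [hzeq] at this
  set G : E := gradient C q with hG
  -- descent lemma
  have h1 : C p ≤ C q + ⟪G, p - q⟫ + β' / 2 * ‖p - q‖ ^ 2 := descent_lemma hβ hdiff hlip q p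
  -- strong convexity lower bound at q toward z
  have h2 : C q + ⟪G, z - q⟫ + μ / 2 * ‖z - q‖ ^ 2 ≤ C z := sc_lower hdiff hsc q z
  -- splitting inner products
  have hsplit1 : ⟪G, p - q⟫ = ⟪G, z - q⟫ + ⟪G, p - z⟫ := by
    rw [← inner_add_right]; congr 1; abel
  have hsplit2 : ⟪G, p - z⟫ = ⟪gv, p - z⟫ + ⟪G - gv, p - z⟫ := by
    rw [← inner_add_left]; congr 1; abel
  -- projection variational inequality
  have hpv := proj_varineq hXne hXconv hproj (q - (1 / β') • gv) hzX
  rw [← hp] at hpv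
  have hexp : ⟪q - (1 / β') • gv - p, z - p⟫
      = ⟪q - p, z - p⟫ - (1 / β') * ⟪gv, z - p⟫ := by
    rw [sub_right_comm, inner_sub_left, real_inner_smul_left]
  rw [hexp] at hpv
  have h3 : ⟪gv, p - z⟫ ≤ β' * ⟪q - p, p - z⟫ := by
    have h3a : β' * ⟪q - p, z - p⟫ ≤ β' * ((1 / β') * ⟪gv, z - p⟫) :=
      mul_le_mul_of_nonneg_left (by linarith) hβ.le
    have h3b : β' * ((1 / β') * ⟪gv, z - p⟫) = ⟪gv, z - p⟫ := by field_simp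
    have hs1 : ⟪gv, p - z⟫ = -⟪gv, z - p⟫ := by
      rw [← inner_neg_right]; congr 1; abel
    have hs2 : ⟪q - p, p - z⟫ = -⟪q - p, z - p⟫ := by
      rw [← inner_neg_right]; congr 1; abel
    rw [hs1, hs2]
    rw [h3b] at h3a
    linarith
  -- error bound
  have h4 : ⟪G - gv, p - z⟫ ≤ ε := by
    have hdecomp : p - z = (1 - l) • (p - q) + l • (p - w) := by rw [hz]; module
    rw [hdecomp, inner_add_right, real_inner_smul_right, real_inner_smul_right]
    have e1 := mul_le_mul_of_nonneg_left he1 (by linarith : (0:ℝ) ≤ 1 - l)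
    have e2 := mul_le_mul_of_nonneg_left he2 hl0.le
    linarith
  -- norm identities
  have h5 : ‖q - z‖ ^ 2 = ‖q - p‖ ^ 2 + 2 * ⟪q - p, p - z⟫ + ‖p - z‖ ^ 2 := by
    rw [show q - z = (q - p) + (p - z) by abel, norm_add_sq_real]
  have h5' : β' * ⟪q - p, p - z⟫
      = β' / 2 * ‖q - z‖ ^ 2 - β' / 2 * ‖q - p‖ ^ 2 - β' / 2 * ‖p - z‖ ^ 2 := by
    linear_combination (-β' / 2) * h5
  have h6 : ‖q - z‖ ^ 2 = l ^ 2 * ‖q - w‖ ^ 2 := by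
    rw [show q - z = l • (q - w) by rw [hz]; module, norm_smul, Real.norm_eq_abs,
      mul_pow, sq_abs]
  have h6b : ‖z - q‖ ^ 2 = l ^ 2 * ‖q - w‖ ^ 2 := by
    rw [show z - q = l • (w - q) by rw [hz]; module, norm_smul, Real.norm_eq_abs,
      mul_pow, sq_abs, norm_sub_rev]
  have hqp : ‖p - q‖ ^ 2 = ‖q - p‖ ^ 2 := by rw [norm_sub_rev]
  -- strong convexity combination
  have h7 : C z ≤ (1 - l) * C q + l * C w - μ / 2 * (l * (1 - l)) * ‖q - w‖ ^ 2 := by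
    have := sc_comb hsc q w hl0.le hl1.le
    rw [← hz] at this
    exact this
  -- algebraic cancellation
  have hcancel : μ / 2 * (l * (1 - l)) * ‖q - w‖ ^ 2
      = β' / 2 * (l ^ 2 * ‖q - w‖ ^ 2) - μ / 2 * (l ^ 2 * ‖q - w‖ ^ 2) := by
    rw [hl]; field_simp
  have hpz : (0:ℝ) ≤ β' * ‖p - z‖ ^ 2 := by positivity
  rw [hqp] at h1
  rw [h6b] at h2
  rw [h6] at h5'
  linarith [h1, h2, h3, h4, h5', h7, hcancel, hpz, hsplit1, hsplit2]

end Aux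

/-- Linear convergence of projected inexact gradient descent: with
`0 < μ < β′`, `γ = μ/(β′ − μ)`, iterates `x^{j+1} = Π_X(x^j − (1/β′)g^j)` starting from
`x⁰ ∈ X`, and inner-product error bounds
`⟨∇C(x^j) − g^j, x^{j+1} − x^j⟩ ≤ ε` and `⟨∇C(x^j) − g^j, x^{j+1} − x*⟩ ≤ ε` for all
`j < K`, one has
`C(x^K) − C(x*) ≤ (1/(1 + γ))^K (C(x⁰) − C(x*)) + ((1 + γ)/γ)ε`. -/
theorem inexact_pgd_linear_convergence {n : ℕ} (C : EuclideanSpace ℝ (Fin n) → ℝ)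
    (β' μ : ℝ) (hμ : 0 < μ) (hμβ : μ < β') (hdiff : Differentiable ℝ C)
    (hlip : ∀ z w, ‖gradient C z - gradient C w‖ ≤ β' * ‖z - w‖)
    (hsc : ConvexOn ℝ Set.univ (fun z => C z - μ / 2 * ‖z‖ ^ 2))
    (X : Set (EuclideanSpace ℝ (Fin n)))
    (hXne : X.Nonempty) (hXcl : IsClosed X) (hXconv : Convex ℝ X)
    (proj : EuclideanSpace ℝ (Fin n) → EuclideanSpace ℝ (Fin n))
    (hproj : ∀ w, proj w ∈ X ∧ ∀ z ∈ X, ‖proj w - w‖ ≤ ‖z - w‖)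
    (xstar : EuclideanSpace ℝ (Fin n)) (hxstar : xstar ∈ X)
    (ε : ℝ) (hε : 0 ≤ ε) (K : ℕ)
    (x g : ℕ → EuclideanSpace ℝ (Fin n)) (hx0 : x 0 ∈ X)
    (hupd : ∀ j < K, x (j + 1) = proj (x j - (1 / β') • g j))
    (herr1 : ∀ j < K, ⟪gradient C (x j) - g j, x (j + 1) - x j⟫ ≤ ε)
    (herr2 : ∀ j < K, ⟪gradient C (x j) - g j, x (j + 1) - xstar⟫ ≤ ε) :
    C (x K) - C xstar ≤
      (1 / (1 + μ / (β' - μ))) ^ K * (C (x 0) - C xstar) +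
        (1 + μ / (β' - μ)) / (μ / (β' - μ)) * ε := by
  have hβ : (0:ℝ) < β' := hμ.trans hμβ
  set ρ : ℝ := 1 - μ / β' with hρ
  have hl0 : 0 < μ / β' := div_pos hμ hβ
  have hl1 : μ / β' < 1 := (div_lt_one hβ).mpr hμβ
  have hρ0 : 0 < ρ := by rw [hρ]; linarith
  have hρ1 : ρ < 1 := by rw [hρ]; linarith
  have hXmem : ∀ m, m ≤ K → x m ∈ X := by
    intro m
    induction m with
    | zero => intro _; exact hx0
    | succ j _ => intro hm; rw [hupd j (by omega)]; exact (hproj _).1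
  have key : ∀ m, m ≤ K → C (x m) - C xstar ≤
      ρ ^ m * (C (x 0) - C xstar) + (∑ i ∈ Finset.range m, ρ ^ i) * ε := by
    intro m
    induction m with
    | zero => intro _; simp
    | succ j ih =>
      intro hm
      have hjK : j < K := hm
      have ihj := ih hjK.le
      have hstep := one_step hμ hμβ hdiff hlip hsc hXne hXconv hproj
        (hXmem j hjK.le) hxstar (hupd j hjK) (herr1 j hjK) (herr2 j hjK)
      rw [← hρ] at hstep
      have hgs : ∑ i ∈ Finset.range (j + 1), ρ ^ i
          = ρ * ∑ i ∈ Finset.range j, ρ ^ i + 1 := geom_sum_succ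
      have hmul := mul_le_mul_of_nonneg_left ihj hρ0.le
      have hpow : ρ * ρ ^ j = ρ ^ (j + 1) := (pow_succ' ρ j).symm
      have hexp : ρ * (ρ ^ j * (C (x 0) - C xstar) + (∑ i ∈ Finset.range j, ρ ^ i) * ε)
          = ρ ^ (j + 1) * (C (x 0) - C xstar) + (ρ * ∑ i ∈ Finset.range j, ρ ^ i) * ε := by
        rw [← hpow]; ring
      rw [hexp] at hmul
      rw [hgs]
      linarith [hstep, hmul]
  have hfin := key K le_rfl
  have hβμ : (0:ℝ) < β' - μ := by linarith
  have hsum_le : (∑ i ∈ Finset.range K, ρ ^ i) ≤ β' / μ := by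
    have hmul : (∑ i ∈ Finset.range K, ρ ^ i) * (μ / β') = 1 - ρ ^ K := by
      have h := geom_sum_mul ρ K
      have h1ρ : ρ - 1 = -(μ / β') := by rw [hρ]; ring
      rw [h1ρ] at h
      linarith [h]
    have hpowK : (0:ℝ) ≤ ρ ^ K := pow_nonneg hρ0.le K
    have h2 : (∑ i ∈ Finset.range K, ρ ^ i) * (μ / β') ≤ 1 := by rw [hmul]; linarith
    calc (∑ i ∈ Finset.range K, ρ ^ i)
        = (∑ i ∈ Finset.range K, ρ ^ i) * (μ / β') * (β' / μ) := by
          field_simp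
      _ ≤ 1 * (β' / μ) := mul_le_mul_of_nonneg_right h2 (div_nonneg hβ.le hμ.le)
      _ = β' / μ := one_mul _
  have hco1 : (1 : ℝ) / (1 + μ / (β' - μ)) = ρ := by
    rw [hρ]; field_simp; ring
  have hco2 : (1 + μ / (β' - μ)) / (μ / (β' - μ)) = β' / μ := by
    have h1 : β' - μ ≠ 0 := by linarith
    have h2 : μ ≠ 0 := hμ.ne'
    field_simp
    try ring
  have hsε : (∑ i ∈ Finset.range K, ρ ^ i) * ε ≤ β' / μ * ε :=
    mul_le_mul_of_nonneg_right hsum_le hε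
  rw [hco1, hco2]
  linarith [hfin, hsε]
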